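/- Under the triggering model, let g be the random subgraph of G obtained by sampling a triggering set T(v) for each node v independently from its triggering distribution and keeping only edges from nodes of T(v) into v. Fix a node set S and node v. Then the probability that S intersects the set of nodes that can reach v in g equals the probability that S, used as a seed set, activates v in the triggering-model propagation process on G. -/

import Mathlib

open MeasureTheory ProbabilityTheory

/-- The set of nodes activated by timestamp `t+1` of the triggering-model propagation process
from seed set `S`, given sampled triggering sets: `trig v u = true` means `u` belongs to the
sampled triggering set of `v`; an inactive node `v` becomes active once its triggering set
contains an active node. -/
def trigActivated {V : Type*} (trig : V → V → Bool) (S : Set V) : ℕ → Set V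
  | 0 => S
  | t + 1 => trigActivated trig S t ∪ {v | ∃ u ∈ trigActivated trig S t, trig v u = true}

/-- Lemma 4 of Tang–Xiao–Shi: under the triggering model, let `g` be the random subgraph of
`G` obtained by sampling a triggering set for each node `v` independently from its triggering
distribution and keeping only the edges from nodes of the triggering set into `v`. For a fixed
node set `S` and node `v`, the probability that `S` intersects the set of nodes that can reach
`v` in `g` equals the probability that `S`, used as a seed set, activates `v` in the
triggering-model propagation process on `G`. -/
theorem triggering_rr_set_eq_activation
    {V : Type*} [Fintype V]
    (μ : Measure (V → V → Bool)) [IsProbabilityMeasure μ]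
    (hindep : iIndepFun
      (fun (v : V) (trig : V → V → Bool) => trig v) μ)
    (S : Set V) (v : V) :
    μ {trig | (S ∩ {u | Relation.ReflTransGen (fun a b => trig b a = true) u v}).Nonempty}
      = μ {trig | v ∈ ⋃ t, trigActivated trig S t} := by
  congr 1
  ext trig
  simp only [Set.mem_setOf_eq, Set.mem_iUnion]
  constructor
  · rintro ⟨u, hu, hr⟩
    have : ∀ w, Relation.ReflTransGen (fun a b => trig b a = true) u w →
        ∃ t, w ∈ trigActivated trig S t := by
      intro w hw
      induction hw with
      | refl => exact ⟨0, hu⟩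
      | tail _ hstep ih =>
        obtain ⟨t, ht⟩ := ih
        exact ⟨t + 1, Or.inr ⟨_, ht, hstep⟩⟩
    exact this v hr
  · rintro ⟨t, ht⟩
    induction t generalizing v with
    | zero => exact ⟨v, ht, Relation.ReflTransGen.refl⟩
    | succ t ih =>
      rcases ht with ht | ⟨u, hu, htrig⟩
      · exact ih v ht
      · obtain ⟨w, hwS, hwu⟩ := ih u hu
        exact ⟨w, hwS, hwu.tail htrig⟩
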